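/- Let Q : ℝ → ℂ^{m×m} have locally integrable entries. Then J D_max(−Q) J = D_max(Q^⊤), where J = σ₁C is the conjugation (JF)(x) = (conj(F₂(x)), conj(F₁(x)))^⊤. In particular, if Q(x)^⊤ = Q(x) for a.e. x, then J D_max(−Q) J = D_max(Q) and consequently D_min(Q) is J-symmetric, i.e., J D_min(Q) J ⊆ D_min(Q)*. -/

import Mathlib

open MeasureTheory

noncomputable section

/-- Index set for `ℂ^{2m}`, split into the two `m`-blocks. -/
abbrev Idx (m : ℕ) := Sum (Fin m) (Fin m)

/-- `ℂ^{2m}` with its Euclidean (Hilbert space) structure. -/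
abbrev Vec (m : ℕ) := EuclideanSpace ℂ (Idx m)

/-- A function is locally absolutely continuous iff it is the indefinite integral of a
locally integrable function. -/
def LocAC {E : Type*} [NormedAddCommGroup E] [NormedSpace ℝ E] (F : ℝ → E) : Prop :=
  ∃ g : ℝ → E, LocallyIntegrable g volume ∧ ∀ x : ℝ, F x = F 0 + ∫ t in (0:ℝ)..x, g t

/-- The Dirac-type differential expression `M(Q)F = i (F₁' - Q F₂, -Q* F₁ - F₂')ᵀ`. -/
def Mop {m : ℕ} (Q : ℝ → Fin m → Fin m → ℂ) (F : ℝ → Vec m) : ℝ → Vec m := fun x => WithLp.toLp 2 (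
  Sum.elim
    (fun i => Complex.I * (deriv (fun y => F y (Sum.inl i)) x - ∑ j, Q x i j * F x (Sum.inr j)))
    (fun i => Complex.I * (-(∑ j, (starRingEnd ℂ) (Q x j i) * F x (Sum.inl j))
        - deriv (fun y => F y (Sum.inr i)) x)))

/-- The underlying Hilbert space `L²(ℝ)^{2m}`. -/
abbrev Hsp (m : ℕ) := Lp (Vec m) 2 (volume : Measure ℝ)

/-- The pointwise conjugation `J = σ₁ C` on `ℂ^{2m}`:
`(J v)₁ = conj v₂`, `(J v)₂ = conj v₁`. -/
def Jfun {m : ℕ} (v : Vec m) : Vec m :=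
  WithLp.toLp 2 (Sum.elim (fun i => (starRingEnd ℂ) (v (Sum.inr i))) (fun i => (starRingEnd ℂ) (v (Sum.inl i))))

/-- `JRel u w` expresses that `w = J u` as elements of `L²(ℝ)^{2m}`. -/
def JRel {m : ℕ} (u w : Hsp m) : Prop :=
  (⇑w : ℝ → Vec m) =ᵐ[volume] fun x => Jfun (u x)

/-- The graph of the maximal operator `D_max(Q)` in `L²(ℝ)^{2m}`: pairs `(G, M(Q)G)` where `G`
has a locally absolutely continuous representative `F` with `M(Q)F ∈ L²`. -/
def maxGraph {m : ℕ} (Q : ℝ → Fin m → Fin m → ℂ) : Set (Hsp m × Hsp m) :=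
  {p | ∃ F : ℝ → Vec m, LocAC F ∧ (⇑p.1 : ℝ → Vec m) =ᵐ[volume] F ∧
        (⇑p.2 : ℝ → Vec m) =ᵐ[volume] Mop Q F}

/-- The graph of the minimal operator `D_min(Q)`: the restriction of `D_max(Q)` to
compactly supported elements of its domain. -/
def minGraph {m : ℕ} (Q : ℝ → Fin m → Fin m → ℂ) : Set (Hsp m × Hsp m) :=
  {p | ∃ F : ℝ → Vec m, LocAC F ∧ HasCompactSupport F ∧ (⇑p.1 : ℝ → Vec m) =ᵐ[volume] F ∧
        (⇑p.2 : ℝ → Vec m) =ᵐ[volume] Mop Q F}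

/-- The graph of the Hilbert-space adjoint of the (densely defined) operator with graph `Γ`:
`(u, v)` belongs to it iff `⟪SF, u⟫ = ⟪F, v⟫` for all `(F, SF) ∈ Γ`. -/
def adjGraph {m : ℕ} (Γ : Set (Hsp m × Hsp m)) : Set (Hsp m × Hsp m) :=
  {q | ∀ p ∈ Γ, (inner ℂ p.2 q.1 : ℂ) = inner ℂ p.1 q.2}

/-- The graph of `J S J` for an operator with graph `Γ` (recall `J² = I`). -/
def Jconj {m : ℕ} (Γ : Set (Hsp m × Hsp m)) : Set (Hsp m × Hsp m) :=
  {p | ∃ q ∈ Γ, JRel p.1 q.1 ∧ JRel p.2 q.2}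

/-! ### Auxiliary lemmas -/

section Aux

open Filter Set
open scoped Topology

lemma MeasureTheory.LocallyIntegrable.intervalIntegrable2 {E : Type*} [NormedAddCommGroup E]
    {g : ℝ → E} (hg : LocallyIntegrable g volume) (a b : ℝ) :
    IntervalIntegrable g volume a b := by
  rw [intervalIntegrable_iff]
  exact (hg.integrableOn_isCompact isCompact_uIcc).mono_set Set.uIoc_subset_uIcc

lemma Jfun_invol {m : ℕ} (v : Vec m) : Jfun (Jfun v) = v := by
  ext ι; cases ι <;> simp [Jfun]

def Jlin (m : ℕ) : Vec m →ₗ[ℝ] Vec m where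
  toFun := Jfun
  map_add' v w := by ext ι; cases ι <;> simp [Jfun]
  map_smul' c v := by
    ext ι
    cases ι <;> simp [Jfun, Complex.real_smul]

lemma Jlin_norm {m : ℕ} (v : Vec m) : ‖Jlin m v‖ = ‖v‖ := by
  rw [EuclideanSpace.norm_eq, EuclideanSpace.norm_eq]
  congr 1
  rw [Fintype.sum_sum_type, Fintype.sum_sum_type]
  simp only [Jlin, LinearMap.coe_mk, AddHom.coe_mk, Jfun, PiLp.toLp_apply, Sum.elim_inl, Sum.elim_inr,
    RCLike.norm_conj]
  exact add_comm _ _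

def Jcl (m : ℕ) : Vec m →L[ℝ] Vec m :=
  (Jlin m).mkContinuous 1 (fun v => by rw [Jlin_norm]; simp)

lemma Jcl_apply {m : ℕ} (v : Vec m) : Jcl m v = Jfun v := rfl

lemma locallyIntegrable_comp_clm {E F : Type*} [NormedAddCommGroup E] [NormedSpace ℝ E]
    [NormedAddCommGroup F] [NormedSpace ℝ F] (L : E →L[ℝ] F) {g : ℝ → E}
    (hg : LocallyIntegrable g volume) : LocallyIntegrable (fun x => L (g x)) volume := by
  intro x
  obtain ⟨s, hs, hint⟩ := hg x
  exact ⟨s, hs, L.integrable_comp hint⟩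

lemma LocAC.comp_clm {E F : Type*} [NormedAddCommGroup E] [NormedSpace ℝ E] [CompleteSpace E]
    [NormedAddCommGroup F] [NormedSpace ℝ F] [CompleteSpace F] (L : E →L[ℝ] F) {G : ℝ → E}
    (hG : LocAC G) : LocAC (fun x => L (G x)) := by
  obtain ⟨g, hg, hrep⟩ := hG
  refine ⟨fun x => L (g x), locallyIntegrable_comp_clm L hg, fun x => ?_⟩
  simp only [hrep x, map_add, ← L.intervalIntegral_comp_comm (hg.intervalIntegrable2 0 x)]

lemma deriv_conj (f : ℝ → ℂ) (x : ℝ) :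
    deriv (fun y => (starRingEnd ℂ) (f y)) x = (starRingEnd ℂ) (deriv f x) := by
  by_cases hf : DifferentiableAt ℝ f x
  · exact (Complex.conjCLE.hasFDerivAt.comp_hasDerivAt x hf.hasDerivAt).deriv
  · have hf' : ¬ DifferentiableAt ℝ (fun y => (starRingEnd ℂ) (f y)) x := by
      intro h
      have h2 : DifferentiableAt ℝ (fun y => (starRingEnd ℂ) ((starRingEnd ℂ) (f y))) x := by
        simpa [Function.comp_def] using (Complex.conjCLE.differentiable.differentiableAt).comp x h
      simp only [Complex.conj_conj] at h2
      exact hf h2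
    rw [deriv_zero_of_not_differentiableAt hf, deriv_zero_of_not_differentiableAt hf', map_zero]

lemma Mop_transpose_J {m : ℕ} (Q : ℝ → Fin m → Fin m → ℂ) (F : ℝ → Vec m) :
    Mop (fun x i j => Q x j i) (fun x => Jfun (F x)) =
      fun x => Jfun (Mop (fun x i j => -(Q x i j)) F x) := by
  funext x
  ext ι
  cases ι with
  | inl i =>
    show Complex.I * (deriv (fun y => Jfun (F y) (Sum.inl i)) x - _) = _
    simp only [Mop, Jfun, Sum.elim_inl, Sum.elim_inr, deriv_conj, map_sub, map_neg, map_mul,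
      map_sum, Complex.conj_I, Complex.conj_conj, neg_mul, Finset.sum_neg_distrib]
    ring
  | inr i =>
    show Complex.I * (_ - deriv (fun y => Jfun (F y) (Sum.inr i)) x) = _
    simp only [Mop, Jfun, Sum.elim_inl, Sum.elim_inr, deriv_conj, map_sub, map_neg, map_mul,
      map_sum, Complex.conj_I, Complex.conj_conj, neg_mul, Finset.sum_neg_distrib]
    ring

lemma ae_hasDerivAt_primitive {E : Type*} [NormedAddCommGroup E] [NormedSpace ℝ E]
    [CompleteSpace E] {g : ℝ → E} (hg : LocallyIntegrable g volume) :
    ∀ᵐ x ∂(volume : Measure ℝ), HasDerivAt (fun y => ∫ t in (0:ℝ)..y, g t) (g x) x := by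
  have hV := VitaliFamily.ae_tendsto_average_norm_sub
    (v := IsUnifLocDoublingMeasure.vitaliFamily (volume : Measure ℝ) 1) hg
  filter_upwards [hV] with x hx
  set F : ℝ → E := fun y => ∫ t in (0:ℝ)..y, g t with hF
  have key : ∀ y : ℝ, y ≠ x →
      ‖slope F x y - g x‖ ≤ ⨍ t in uIcc x y, ‖g t - g x‖ := by
    intro y hy
    have hsub : F y - F x = ∫ t in x..y, g t := by
      rw [hF]
      simp only
      rw [← intervalIntegral.integral_add_adjacent_intervals (hg.intervalIntegrable2 0 x)
        (hg.intervalIntegrable2 x y)]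
      abel
    have hslope : slope F x y - g x = (y - x)⁻¹ • (∫ t in x..y, (g t - g x)) := by
      rw [slope_def_module, hsub, intervalIntegral.integral_sub (hg.intervalIntegrable2 x y)
        (intervalIntegrable_const), smul_sub, intervalIntegral.integral_const, smul_smul,
        inv_mul_cancel₀ (sub_ne_zero.2 hy), one_smul]
    have hIOn : IntegrableOn (fun t => ‖g t - g x‖) (uIcc x y) volume :=
      ((hg.integrableOn_isCompact isCompact_uIcc).sub
        (integrableOn_const isCompact_uIcc.measure_lt_top.ne)).norm
    have h1 : ‖∫ t in x..y, (g t - g x)‖ ≤ ∫ t in uIcc x y, ‖g t - g x‖ := by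
      refine (intervalIntegral.norm_integral_le_integral_norm_uIoc).trans ?_
      exact setIntegral_mono_set hIOn (Eventually.of_forall fun t => norm_nonneg _)
        (HasSubset.Subset.eventuallyLE uIoc_subset_uIcc)
    have hvol : (volume (uIcc x y)).toReal = |y - x| := by
      rcases le_total x y with h | h
      · rw [uIcc_of_le h, Real.volume_Icc, ENNReal.toReal_ofReal (by linarith),
          abs_of_nonneg (by linarith)]
      · rw [uIcc_of_ge h, Real.volume_Icc, ENNReal.toReal_ofReal (by linarith),
          abs_of_nonpos (by linarith)]
        ring
    rw [hslope, norm_smul, norm_inv, Real.norm_eq_abs, setAverage_eq, measureReal_def, hvol, smul_eq_mul]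
    exact mul_le_mul_of_nonneg_left h1 (by positivity)
  have havg : Tendsto (fun y => ⨍ t in uIcc x y, ‖g t - g x‖) (𝓝[≠] x) (𝓝 0) := by
    rw [← nhdsLT_sup_nhdsGT, tendsto_sup]
    constructor
    · apply Tendsto.congr' _ (hx.comp (Real.tendsto_Icc_vitaliFamily_left x))
      filter_upwards [self_mem_nhdsWithin] with y (hy : y < x)
      simp [Function.comp, uIcc_of_ge hy.le]
    · apply Tendsto.congr' _ (hx.comp (Real.tendsto_Icc_vitaliFamily_right x))
      filter_upwards [self_mem_nhdsWithin] with y (hy : x < y)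
      simp [Function.comp, uIcc_of_le hy.le]
  rw [hasDerivAt_iff_tendsto_slope, tendsto_iff_norm_sub_tendsto_zero]
  apply squeeze_zero' (Eventually.of_forall fun t => norm_nonneg _) _ havg
  filter_upwards [self_mem_nhdsWithin] with y (hy : y ≠ x) using key y hy

lemma diag_null : ((volume : Measure ℝ).prod volume) {z : ℝ × ℝ | z.1 = z.2} = 0 := by
  have hm : MeasurableSet {z : ℝ × ℝ | z.1 = z.2} :=
    (isClosed_eq continuous_fst continuous_snd).measurableSet
  rw [Measure.prod_apply hm]
  have h1 : ∀ x : ℝ, (Prod.mk x ⁻¹' {z : ℝ × ℝ | z.1 = z.2}) = {x} := by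
    intro x; ext y; simp [eq_comm]
  simp [h1]

/-- Integration by parts for indefinite integrals of locally integrable functions. -/
lemma integral_Icc_parts {a b ga gb : ℝ → ℂ}
    (hga : LocallyIntegrable ga volume) (hgb : LocallyIntegrable gb volume)
    (ha : ∀ x, a x = a 0 + ∫ t in (0:ℝ)..x, ga t)
    (hb : ∀ x, b x = b 0 + ∫ t in (0:ℝ)..x, gb t)
    (r s : ℝ) (hrs : r ≤ s) :
    ∫ t in Set.Icc r s, (ga t * b t + a t * gb t) = a s * b s - a r * b r := by
  have hai : ∀ x, a x = a r + ∫ t in r..x, ga t := by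
    intro x
    rw [ha x, ha r, add_assoc, ← intervalIntegral.integral_add_adjacent_intervals
      (hga.intervalIntegrable2 0 r) (hga.intervalIntegrable2 r x)]
  have hbi : ∀ x, b x = b r + ∫ t in r..x, gb t := by
    intro x
    rw [hb x, hb r, add_assoc, ← intervalIntegral.integral_add_adjacent_intervals
      (hgb.intervalIntegrable2 0 r) (hgb.intervalIntegrable2 r x)]
  have hacont : Continuous a := by
    refine Continuous.congr ?_ (fun x => (ha x).symm)
    exact continuous_const.add
      (intervalIntegral.continuous_primitive (fun c d => hga.intervalIntegrable2 c d) 0)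
  have hbcont : Continuous b := by
    refine Continuous.congr ?_ (fun x => (hb x).symm)
    exact continuous_const.add
      (intervalIntegral.continuous_primitive (fun c d => hgb.intervalIntegrable2 c d) 0)
  set I : Set ℝ := Set.Icc r s with hI
  have hImeas : MeasurableSet I := measurableSet_Icc
  have hgaI : IntegrableOn ga I volume := hga.integrableOn_isCompact isCompact_Icc
  have hgbI : IntegrableOn gb I volume := hgb.integrableOn_isCompact isCompact_Icc
  have hgab : IntegrableOn (fun t => ga t * b t) I volume :=
    hgaI.mul_continuousOn hbcont.continuousOn isCompact_Icc
  have hagb : IntegrableOn (fun t => a t * gb t) I volume :=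
    hgbI.continuousOn_mul hacont.continuousOn isCompact_Icc
  have hIcc : ∀ x, r ≤ x → (∫ t in Set.Icc r x, ga t) = ∫ t in r..x, ga t := by
    intro x hx
    rw [intervalIntegral.integral_of_le hx, integral_Icc_eq_integral_Ioc]
  have hIccb : ∀ x, r ≤ x → (∫ t in Set.Icc r x, gb t) = ∫ t in r..x, gb t := by
    intro x hx
    rw [intervalIntegral.integral_of_le hx, integral_Icc_eq_integral_Ioc]
  set c : ℝ × ℝ → ℂ := fun z => ga z.1 * gb z.2 with hc
  have hcInt : Integrable c ((volume.restrict I).prod (volume.restrict I)) := hgaI.mul_prod hgbI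
  have hA : MeasurableSet {z : ℝ × ℝ | z.2 ≤ z.1} :=
    (isClosed_le continuous_snd continuous_fst).measurableSet
  have hA' : MeasurableSet {z : ℝ × ℝ | z.1 ≤ z.2} :=
    (isClosed_le continuous_fst continuous_snd).measurableSet
  have hS1 : (∫ z in {z : ℝ × ℝ | z.2 ≤ z.1}, c z ∂((volume.restrict I).prod (volume.restrict I)))
      = ∫ x in I, ga x * ∫ y in Set.Icc r x, gb y := by
    rw [← integral_indicator hA, integral_prod _ (hcInt.indicator hA)]
    refine setIntegral_congr_fun hImeas (fun x hx => ?_)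
    have hpt : ∀ y : ℝ, ({z : ℝ × ℝ | z.2 ≤ z.1}.indicator c) (x, y)
        = (Set.Iic x).indicator (fun y => ga x * gb y) y := by
      intro y
      by_cases h : y ≤ x <;> simp [Set.indicator, h, hc]
    simp_rw [hpt]
    rw [setIntegral_indicator measurableSet_Iic, integral_const_mul]
    have hseteq : I ∩ Set.Iic x = Set.Icc r x := by
      rw [hI]
      ext y
      simp only [Set.mem_inter_iff, Set.mem_Icc, Set.mem_Iic]
      exact ⟨fun h => ⟨h.1.1, h.2⟩, fun h => ⟨⟨h.1, h.2.trans hx.2⟩, h.2⟩⟩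
    rw [hseteq]
  have hS2 : (∫ z in {z : ℝ × ℝ | z.1 ≤ z.2}, c z ∂((volume.restrict I).prod (volume.restrict I)))
      = ∫ y in I, (∫ x in Set.Icc r y, ga x) * gb y := by
    rw [← integral_indicator hA', integral_prod_symm _ (hcInt.indicator hA')]
    refine setIntegral_congr_fun hImeas (fun y hy => ?_)
    have hpt : ∀ x : ℝ, ({z : ℝ × ℝ | z.1 ≤ z.2}.indicator c) (x, y)
        = (Set.Iic y).indicator (fun x => ga x * gb y) x := by
      intro x
      by_cases h : x ≤ y <;> simp [Set.indicator, h, hc]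
    simp_rw [hpt]
    rw [setIntegral_indicator measurableSet_Iic, integral_mul_const]
    have hseteq : I ∩ Set.Iic y = Set.Icc r y := by
      rw [hI]
      ext x
      simp only [Set.mem_inter_iff, Set.mem_Icc, Set.mem_Iic]
      exact ⟨fun h => ⟨h.1.1, h.2⟩, fun h => ⟨⟨h.1, h.2.trans hy.2⟩, h.2⟩⟩
    rw [hseteq]
  have hsplit : (∫ z in {z : ℝ × ℝ | z.2 ≤ z.1}, c z ∂((volume.restrict I).prod (volume.restrict I)))
      + (∫ z in {z : ℝ × ℝ | z.1 ≤ z.2}, c z ∂((volume.restrict I).prod (volume.restrict I)))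
      = ∫ z, c z ∂((volume.restrict I).prod (volume.restrict I)) := by
    have hdm : MeasurableSet {z : ℝ × ℝ | z.1 = z.2} :=
      (isClosed_eq continuous_fst continuous_snd).measurableSet
    have hnull : ∀ S ⊆ {z : ℝ × ℝ | z.1 = z.2},
        ((volume.restrict I).prod (volume.restrict I)) S = 0 := by
      intro S hS
      refine measure_mono_null hS ?_
      rw [Measure.prod_restrict, Measure.restrict_apply hdm]
      exact measure_mono_null Set.inter_subset_left diag_null
    have hcompl : ({z : ℝ × ℝ | z.2 ≤ z.1}ᶜ : Set (ℝ × ℝ))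
        =ᵐ[(volume.restrict I).prod (volume.restrict I)] ({z : ℝ × ℝ | z.1 ≤ z.2} : Set (ℝ × ℝ)) := by
      rw [MeasureTheory.ae_eq_set]
      constructor
      · refine measure_mono_null (fun z hz => ?_) (hnull ∅ (Set.empty_subset _))
        have h1 : ¬ z.2 ≤ z.1 := hz.1
        exact absurd (not_le.1 h1).le hz.2
      · refine hnull _ (fun z hz => ?_)
        exact le_antisymm hz.1 (not_not.1 hz.2)
    calc (∫ z in {z : ℝ × ℝ | z.2 ≤ z.1}, c z ∂((volume.restrict I).prod (volume.restrict I)))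
        + (∫ z in {z : ℝ × ℝ | z.1 ≤ z.2}, c z ∂((volume.restrict I).prod (volume.restrict I)))
        = (∫ z in {z : ℝ × ℝ | z.2 ≤ z.1}, c z ∂((volume.restrict I).prod (volume.restrict I)))
        + (∫ z in {z : ℝ × ℝ | z.2 ≤ z.1}ᶜ, c z ∂((volume.restrict I).prod (volume.restrict I))) := by
          rw [setIntegral_congr_set hcompl]
      _ = ∫ z, c z ∂((volume.restrict I).prod (volume.restrict I)) := integral_add_compl hA hcInt
  have htot : (∫ z, c z ∂((volume.restrict I).prod (volume.restrict I)))
      = (∫ t in I, ga t) * (∫ t in I, gb t) := integral_prod_mul ga gb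
  have hIa : (∫ t in I, ga t) = a s - a r := by
    rw [hI, hIcc s hrs]
    rw [hai s]; ring
  have hIb : (∫ t in I, gb t) = b s - b r := by
    rw [hI, hIccb s hrs]
    rw [hbi s]; ring
  have hint2 : IntegrableOn (fun x => ga x * ∫ y in Set.Icc r x, gb y) I volume := by
    refine (hgab.sub (hgaI.mul_const (b r))).congr ((ae_restrict_mem hImeas).mono fun x hx => ?_)
    simp only [Pi.sub_apply]
    rw [hIccb x hx.1, ← mul_sub]
    congr 1
    rw [hbi x]; ring
  have hint3 : IntegrableOn (fun y => (∫ x in Set.Icc r y, ga x) * gb y) I volume := by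
    refine (hagb.sub (hgbI.const_mul (a r))).congr ((ae_restrict_mem hImeas).mono fun y hy => ?_)
    simp only [Pi.sub_apply]
    rw [hIcc y hy.1, ← sub_mul]
    congr 1
    rw [hai y]; ring
  have hE1 : ∫ t in I, ga t * b t = (∫ t in I, ga t) * b r
      + ∫ x in I, ga x * ∫ y in Set.Icc r x, gb y := by
    have hpt : Set.EqOn (fun t => ga t * b t)
        (fun t => ga t * b r + ga t * ∫ y in Set.Icc r t, gb y) I := by
      intro t ht
      simp only
      rw [hIccb t ht.1, ← mul_add, ← hbi t]
    rw [setIntegral_congr_fun hImeas hpt, integral_add (hgaI.mul_const _) hint2,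
      integral_mul_const]
  have hE2 : ∫ t in I, a t * gb t = a r * (∫ t in I, gb t)
      + ∫ y in I, (∫ x in Set.Icc r y, ga x) * gb y := by
    have hpt : Set.EqOn (fun t => a t * gb t)
        (fun t => a r * gb t + (∫ x in Set.Icc r t, ga x) * gb t) I := by
      intro t ht
      simp only
      rw [hIcc t ht.1, ← add_mul, ← hai t]
    rw [setIntegral_congr_fun hImeas hpt, integral_add (hgbI.const_mul _) hint3,
      integral_const_mul]
  have hS : (∫ x in I, ga x * ∫ y in Set.Icc r x, gb y)
      + (∫ y in I, (∫ x in Set.Icc r y, ga x) * gb y) = (a s - a r) * (b s - b r) := by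
    rw [← hS1, ← hS2, hsplit, htot, hIa, hIb]
  rw [integral_add hgab hagb, hE1, hE2, hIa, hIb]
  linear_combination hS

def projR (m : ℕ) (ι : Idx m) : Vec m →L[ℝ] ℂ :=
  (EuclideanSpace.proj ι : Vec m →L[ℂ] ℂ).restrictScalars ℝ

lemma coord_locInt {m : ℕ} {f : ℝ → Vec m} (hf : LocallyIntegrable f volume) (ι : Idx m) :
    LocallyIntegrable (fun x => f x ι) volume := by
  intro x
  obtain ⟨s, hs, hint⟩ := hf x
  exact ⟨s, hs, (projR m ι).integrable_comp hint⟩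

lemma coord_rep {m : ℕ} {F f : ℝ → Vec m} (hf : LocallyIntegrable f volume)
    (hrep : ∀ x : ℝ, F x = F 0 + ∫ t in (0:ℝ)..x, f t) (ι : Idx m) (x : ℝ) :
    F x ι = F 0 ι + ∫ t in (0:ℝ)..x, f t ι := by
  have h1 : F x ι = projR m ι (F x) := rfl
  rw [h1, hrep x, map_add, ← ContinuousLinearMap.intervalIntegral_comp_comm _
    (hf.intervalIntegrable2 0 x)]
  rfl

lemma ae_deriv_coords {m : ℕ} {F f : ℝ → Vec m} (hf : LocallyIntegrable f volume)
    (hrep : ∀ x : ℝ, F x = F 0 + ∫ t in (0:ℝ)..x, f t) :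
    ∀ᵐ x ∂(volume : Measure ℝ), ∀ ι : Idx m, deriv (fun y => F y ι) x = f x ι := by
  rw [ae_all_iff]
  intro ι
  filter_upwards [ae_hasDerivAt_primitive (coord_locInt hf ι)] with x hx
  have h2 : HasDerivAt (fun y => F y ι) (f x ι) x := by
    have h3 : (fun y => F y ι) = fun y => F 0 ι + ∫ t in (0:ℝ)..y, f t ι := by
      funext y; exact coord_rep hf hrep ι y
    rw [h3]
    exact hx.const_add _
  exact h2.deriv

lemma continuous_coord_of_locAC {m : ℕ} {F f : ℝ → Vec m} (hf : LocallyIntegrable f volume)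
    (hrep : ∀ x : ℝ, F x = F 0 + ∫ t in (0:ℝ)..x, f t) (ι : Idx m) :
    Continuous (fun x => F x ι) := by
  refine Continuous.congr ?_ (fun x => (coord_rep hf hrep ι x).symm)
  exact continuous_const.add (intervalIntegral.continuous_primitive
    (fun c d => (coord_locInt hf ι).intervalIntegrable2 c d) 0)

lemma inner_J_eq_conj {m : ℕ} (u v : Vec m) :
    (inner ℂ u (Jfun v) : ℂ) =
      (starRingEnd ℂ) ((∑ i, u (Sum.inl i) * v (Sum.inr i)) +
        ∑ i, u (Sum.inr i) * v (Sum.inl i)) := by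
  simp only [Jfun, PiLp.toLp_apply, PiLp.inner_apply, RCLike.inner_apply, Fintype.sum_sum_type, Sum.elim_inl,
    Sum.elim_inr, map_add, map_sum, map_mul, Complex.conj_conj]
  exact congrArg₂ (· + ·) (Finset.sum_congr rfl fun _ _ => mul_comm _ _)
    (Finset.sum_congr rfl fun _ _ => mul_comm _ _)

lemma AB_identity {m : ℕ} (Q : ℝ → Fin m → Fin m → ℂ) (F f G g : ℝ → Vec m) (x : ℝ)
    (hsym : ∀ i j, Q x i j = Q x j i)
    (hdF : ∀ ι, deriv (fun y => F y ι) x = f x ι)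
    (hdG : ∀ ι, deriv (fun y => G y ι) x = g x ι) :
    ((∑ i, Mop Q G x (Sum.inl i) * F x (Sum.inr i)) +
        ∑ i, Mop Q G x (Sum.inr i) * F x (Sum.inl i))
      - ((∑ i, G x (Sum.inl i) * Mop Q F x (Sum.inr i)) +
        ∑ i, G x (Sum.inr i) * Mop Q F x (Sum.inl i))
      = Complex.I *
        ((∑ i, (g x (Sum.inl i) * F x (Sum.inr i) + G x (Sum.inl i) * f x (Sum.inr i)))
        - (∑ i, (g x (Sum.inr i) * F x (Sum.inl i) + G x (Sum.inr i) * f x (Sum.inl i)))) := by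
  simp only [Mop, PiLp.toLp_apply, Sum.elim_inl, Sum.elim_inr, hdF, hdG]
  simp only [mul_sub, sub_mul, mul_add, add_mul, neg_mul, mul_neg, neg_neg, mul_assoc,
    Finset.sum_sub_distrib, Finset.sum_add_distrib, Finset.sum_neg_distrib, Finset.mul_sum,
    Finset.sum_mul]
  have h1 : ∑ i : Fin m, ∑ j : Fin m,
        Complex.I * (Q x i j * (G x (Sum.inr j) * F x (Sum.inr i)))
      = ∑ i : Fin m, ∑ j : Fin m,
        G x (Sum.inr i) * (Complex.I * (Q x i j * F x (Sum.inr j))) := by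
    rw [Finset.sum_comm]
    exact Finset.sum_congr rfl fun i _ => Finset.sum_congr rfl fun j _ => by rw [hsym j i]; ring
  have h2 : ∑ i : Fin m, ∑ j : Fin m,
        Complex.I * ((starRingEnd ℂ) (Q x j i) * (G x (Sum.inl j) * F x (Sum.inl i)))
      = ∑ i : Fin m, ∑ j : Fin m,
        G x (Sum.inl i) * (Complex.I * ((starRingEnd ℂ) (Q x j i) * F x (Sum.inl j))) := by
    rw [Finset.sum_comm]
    exact Finset.sum_congr rfl fun i _ => Finset.sum_congr rfl fun j _ => by rw [hsym i j]; ring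
  have h3 : ∑ i : Fin m, G x (Sum.inl i) * (Complex.I * f x (Sum.inr i))
      = ∑ i : Fin m, Complex.I * (G x (Sum.inl i) * f x (Sum.inr i)) :=
    Finset.sum_congr rfl fun i _ => by ring
  have h4 : ∑ i : Fin m, G x (Sum.inr i) * (Complex.I * f x (Sum.inl i))
      = ∑ i : Fin m, Complex.I * (G x (Sum.inr i) * f x (Sum.inl i)) :=
    Finset.sum_congr rfl fun i _ => by ring
  linear_combination -h1 - h2 + h3 - h4

lemma integrable_conj_of {f : ℝ → ℂ} {μ : Measure ℝ} (hf : Integrable f μ) :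
    Integrable (fun x => (starRingEnd ℂ) (f x)) μ := by
  have h : Integrable (fun x => Complex.conjCLE (f x)) μ :=
    ContinuousLinearMap.integrable_comp (Complex.conjCLE : ℂ ≃L[ℝ] ℂ).toContinuousLinearMap hf
  simpa using h

end Aux

theorem J_Dmax_neg_J_eq_Dmax_transpose (m : ℕ) (Q : ℝ → Fin m → Fin m → ℂ)
    (hQ : ∀ i j, LocallyIntegrable (fun x => Q x i j) volume) :
    Jconj (maxGraph (fun x i j => -(Q x i j))) = maxGraph (fun x i j => Q x j i) ∧
      ((∀ᵐ x ∂(volume : Measure ℝ), ∀ i j, Q x i j = Q x j i) →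
        Jconj (maxGraph (fun x i j => -(Q x i j))) = maxGraph Q ∧
          Jconj (minGraph Q) ⊆ adjGraph (minGraph Q)) := by
  have hJlocAC : ∀ {F : ℝ → Vec m}, LocAC F → LocAC (fun x => Jfun (F x)) := by
    intro F hF
    have h := LocAC.comp_clm (Jcl m) hF
    simpa only [Jcl_apply] using h
  have hpart1 : Jconj (maxGraph (fun x i j => -(Q x i j))) = maxGraph (fun x i j => Q x j i) := by
    ext p
    constructor
    · rintro ⟨q, ⟨F, hF, hq1, hq2⟩, hJ1, hJ2⟩
      refine ⟨fun x => Jfun (F x), hJlocAC hF, ?_, ?_⟩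
      · filter_upwards [hJ1.symm.trans hq1] with x hx
        rw [← hx, Jfun_invol]
      · rw [Mop_transpose_J Q F]
        filter_upwards [hJ2.symm.trans hq2] with x hx
        rw [← hx, Jfun_invol]
    · rintro ⟨F, hF, hp1, hp2⟩
      have hMneg : Mop (fun x i j => -(Q x i j)) (fun x => Jfun (F x))
          = fun x => Jfun (Mop (fun x i j => Q x j i) F x) := by
        have h := Mop_transpose_J (fun x a b => -(Q x b a)) F
        simpa only [neg_neg] using h
      refine ⟨((Jcl m).compLp p.1, (Jcl m).compLp p.2),
        ⟨fun x => Jfun (F x), hJlocAC hF, ?_, ?_⟩, ?_, ?_⟩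
      · refine ((Jcl m).coeFn_compLp' p.1).trans ?_
        filter_upwards [hp1] with x hx
        rw [Jcl_apply, hx]
      · rw [hMneg]
        refine ((Jcl m).coeFn_compLp' p.2).trans ?_
        filter_upwards [hp2] with x hx
        rw [Jcl_apply, hx]
      · refine ((Jcl m).coeFn_compLp' p.1).trans ?_
        filter_upwards with x
        rw [Jcl_apply]
      · refine ((Jcl m).coeFn_compLp' p.2).trans ?_
        filter_upwards with x
        rw [Jcl_apply]
  refine ⟨hpart1, fun hsym => ?_⟩
  have hMopQ : ∀ F : ℝ → Vec m, (Mop (fun x i j => Q x j i) F) =ᵐ[volume] Mop Q F := by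
    intro F
    filter_upwards [hsym] with x hx
    ext ι
    cases ι with
    | inl i =>
      show Complex.I * (_ - ∑ j, Q x j i * F x (Sum.inr j))
        = Complex.I * (_ - ∑ j, Q x i j * F x (Sum.inr j))
      congr 2
      exact Finset.sum_congr rfl fun j _ => by rw [hx i j]
    | inr i =>
      show Complex.I * (-(∑ j, (starRingEnd ℂ) (Q x i j) * F x (Sum.inl j)) - _)
        = Complex.I * (-(∑ j, (starRingEnd ℂ) (Q x j i) * F x (Sum.inl j)) - _)
      congr 3
      exact Finset.sum_congr rfl fun j _ => by rw [hx j i]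
  have hmax : maxGraph (fun x i j => Q x j i) = maxGraph Q := by
    ext p
    constructor
    · rintro ⟨F, hF, h1, h2⟩; exact ⟨F, hF, h1, h2.trans (hMopQ F)⟩
    · rintro ⟨F, hF, h1, h2⟩; exact ⟨F, hF, h1, h2.trans (hMopQ F).symm⟩
  refine ⟨hpart1.trans hmax, ?_⟩
  rintro p ⟨q, ⟨F, ⟨f, hf, hFrep⟩, hFc, hq1, hq2⟩, hJ1, hJ2⟩
  intro w ⟨G, ⟨g, hg, hGrep⟩, hGc, hw1, hw2⟩
  have hp1 : (⇑p.1 : ℝ → Vec m) =ᵐ[volume] fun x => Jfun (F x) := by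
    filter_upwards [hJ1.symm.trans hq1] with x hx
    rw [← hx, Jfun_invol]
  have hp2 : (⇑p.2 : ℝ → Vec m) =ᵐ[volume] fun x => Jfun (Mop Q F x) := by
    filter_upwards [hJ2.symm.trans hq2] with x hx
    rw [← hx, Jfun_invol]
  set A : ℝ → ℂ := fun x => (∑ i, Mop Q G x (Sum.inl i) * F x (Sum.inr i)) +
      ∑ i, Mop Q G x (Sum.inr i) * F x (Sum.inl i) with hA
  set B : ℝ → ℂ := fun x => (∑ i, G x (Sum.inl i) * Mop Q F x (Sum.inr i)) +
      ∑ i, G x (Sum.inr i) * Mop Q F x (Sum.inl i) with hB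
  have hLa : (fun x => (inner ℂ (w.2 x) (p.1 x) : ℂ)) =ᵐ[volume]
      fun x => (starRingEnd ℂ) (A x) := by
    filter_upwards [hw2, hp1] with x h1 h2
    rw [h1, h2, inner_J_eq_conj]
  have hRa : (fun x => (inner ℂ (w.1 x) (p.2 x) : ℂ)) =ᵐ[volume]
      fun x => (starRingEnd ℂ) (B x) := by
    filter_upwards [hw1, hp2] with x h1 h2
    rw [h1, h2, inner_J_eq_conj]
  have hAc : Integrable (fun x => (starRingEnd ℂ) (A x)) volume :=
    (L2.integrable_inner w.2 p.1).congr hLa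
  have hBc : Integrable (fun x => (starRingEnd ℂ) (B x)) volume :=
    (L2.integrable_inner w.1 p.2).congr hRa
  have hAint : Integrable A volume := by
    have h := integrable_conj_of hAc
    simpa [Complex.conj_conj] using h
  have hBint : Integrable B volume := by
    have h := integrable_conj_of hBc
    simpa [Complex.conj_conj] using h
  have hdF := ae_deriv_coords hf hFrep
  have hdG := ae_deriv_coords hg hGrep
  set D : ℝ → ℂ := fun x =>
      (∑ i, (g x (Sum.inl i) * F x (Sum.inr i) + G x (Sum.inl i) * f x (Sum.inr i)))
      - (∑ i, (g x (Sum.inr i) * F x (Sum.inl i) + G x (Sum.inr i) * f x (Sum.inl i))) with hD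
  have hABD : (fun x => A x - B x) =ᵐ[volume] fun x => Complex.I * D x := by
    filter_upwards [hsym, hdF, hdG] with x h1 h2 h3
    simp only [hA, hB, hD]
    exact AB_identity Q F f G g x h1 h2 h3
  have hDint : Integrable D volume := by
    refine ((hAint.sub hBint).const_mul (-Complex.I)).congr ?_
    filter_upwards [hABD] with x hx
    simp only [Pi.sub_apply]
    rw [hx, ← mul_assoc, neg_mul, Complex.I_mul_I, neg_neg, one_mul]
  have hDzero : (∫ x, D x) = 0 := by
    obtain ⟨R, hR⟩ := (Metric.isBounded_iff_subset_closedBall 0).1 (hFc.union hGc).isBounded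
    have habs : (0:ℝ) ≤ |R| := abs_nonneg R
    set r : ℝ := -|R| - 1 with hr
    set s : ℝ := |R| + 1 with hs
    have hrs : r ≤ s := by rw [hr, hs]; linarith
    have hsupp : tsupport F ∪ tsupport G ⊆ Set.Icc (-|R|) |R| := by
      intro x hx
      have h1 := hR hx
      rw [Metric.mem_closedBall, Real.dist_eq, sub_zero] at h1
      have h5 := abs_le.1 (h1.trans (le_abs_self R))
      exact ⟨h5.1, h5.2⟩
    have hFr : F r = 0 := image_eq_zero_of_notMem_tsupport fun hm => by
      have h6 := (hsupp (Or.inl hm)).1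
      rw [hr] at h6; linarith
    have hFs : F s = 0 := image_eq_zero_of_notMem_tsupport fun hm => by
      have h6 := (hsupp (Or.inl hm)).2
      rw [hs] at h6; linarith
    have hGr : G r = 0 := image_eq_zero_of_notMem_tsupport fun hm => by
      have h6 := (hsupp (Or.inr hm)).1
      rw [hr] at h6; linarith
    have hGs : G s = 0 := image_eq_zero_of_notMem_tsupport fun hm => by
      have h6 := (hsupp (Or.inr hm)).2
      rw [hs] at h6; linarith
    have hout : ∀ x : ℝ, x ∉ Set.Icc r s → D x = 0 := by
      intro x hx
      have hxF : F x = 0 := image_eq_zero_of_notMem_tsupport fun hm => by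
        refine hx ?_
        have h6 := hsupp (Or.inl hm)
        rw [Set.mem_Icc] at h6 ⊢
        rw [hr, hs]
        exact ⟨by linarith [h6.1], by linarith [h6.2]⟩
      have hxG : G x = 0 := image_eq_zero_of_notMem_tsupport fun hm => by
        refine hx ?_
        have h6 := hsupp (Or.inr hm)
        rw [Set.mem_Icc] at h6 ⊢
        rw [hr, hs]
        exact ⟨by linarith [h6.1], by linarith [h6.2]⟩
      simp [hD, hxF, hxG]
    rw [← integral_add_compl (measurableSet_Icc (a := r) (b := s)) hDint]
    have hcompl0 : (∫ x in (Set.Icc r s)ᶜ, D x) = 0 := by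
      refine integral_eq_zero_of_ae ?_
      rw [Filter.EventuallyEq, ae_restrict_iff' measurableSet_Icc.compl]
      exact Filter.Eventually.of_forall fun x hx => hout x hx
    have hint1 : ∀ ι₁ ι₂ : Idx m, IntegrableOn (fun t => g t ι₁ * F t ι₂) (Set.Icc r s) volume :=
      fun ι₁ ι₂ => ((coord_locInt hg ι₁).integrableOn_isCompact isCompact_Icc).mul_continuousOn
        (continuous_coord_of_locAC hf hFrep ι₂).continuousOn isCompact_Icc
    have hint2 : ∀ ι₁ ι₂ : Idx m, IntegrableOn (fun t => G t ι₁ * f t ι₂) (Set.Icc r s) volume :=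
      fun ι₁ ι₂ => ((coord_locInt hf ι₂).integrableOn_isCompact isCompact_Icc).continuousOn_mul
        (continuous_coord_of_locAC hg hGrep ι₁).continuousOn isCompact_Icc
    have hterm1 : ∀ i : Fin m, (∫ t in Set.Icc r s,
        (g t (Sum.inl i) * F t (Sum.inr i) + G t (Sum.inl i) * f t (Sum.inr i))) = 0 := by
      intro i
      have h := integral_Icc_parts (a := fun t => G t (Sum.inl i)) (b := fun t => F t (Sum.inr i))
        (coord_locInt hg (Sum.inl i)) (coord_locInt hf (Sum.inr i))
        (fun x => coord_rep hg hGrep (Sum.inl i) x) (fun x => coord_rep hf hFrep (Sum.inr i) x)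
        r s hrs
      rw [h]
      simp [hGr, hGs]
    have hterm2 : ∀ i : Fin m, (∫ t in Set.Icc r s,
        (g t (Sum.inr i) * F t (Sum.inl i) + G t (Sum.inr i) * f t (Sum.inl i))) = 0 := by
      intro i
      have h := integral_Icc_parts (a := fun t => G t (Sum.inr i)) (b := fun t => F t (Sum.inl i))
        (coord_locInt hg (Sum.inr i)) (coord_locInt hf (Sum.inl i))
        (fun x => coord_rep hg hGrep (Sum.inr i) x) (fun x => coord_rep hf hFrep (Sum.inl i) x)
        r s hrs
      rw [h]
      simp [hGr, hGs]
    have hsum1 : IntegrableOn (fun t => ∑ i : Fin m,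
        (g t (Sum.inl i) * F t (Sum.inr i) + G t (Sum.inl i) * f t (Sum.inr i)))
        (Set.Icc r s) volume :=
      integrable_finset_sum _ fun i _ => (hint1 _ _).add (hint2 _ _)
    have hsum2 : IntegrableOn (fun t => ∑ i : Fin m,
        (g t (Sum.inr i) * F t (Sum.inl i) + G t (Sum.inr i) * f t (Sum.inl i)))
        (Set.Icc r s) volume :=
      integrable_finset_sum _ fun i _ => (hint1 _ _).add (hint2 _ _)
    have hI1 : (∫ t in Set.Icc r s, ∑ i : Fin m,
          (g t (Sum.inl i) * F t (Sum.inr i) + G t (Sum.inl i) * f t (Sum.inr i)))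
        = ∑ i : Fin m, ∫ t in Set.Icc r s,
          (g t (Sum.inl i) * F t (Sum.inr i) + G t (Sum.inl i) * f t (Sum.inr i)) :=
      integral_finset_sum _ (fun i _ => (hint1 _ _).add (hint2 _ _))
    have hI2 : (∫ t in Set.Icc r s, ∑ i : Fin m,
          (g t (Sum.inr i) * F t (Sum.inl i) + G t (Sum.inr i) * f t (Sum.inl i)))
        = ∑ i : Fin m, ∫ t in Set.Icc r s,
          (g t (Sum.inr i) * F t (Sum.inl i) + G t (Sum.inr i) * f t (Sum.inl i)) :=
      integral_finset_sum _ (fun i _ => (hint1 _ _).add (hint2 _ _))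
    have hIcc0 : (∫ t in Set.Icc r s, D t) = 0 := by
      simp only [hD]
      rw [integral_sub hsum1 hsum2, hI1, hI2]
      simp only [hterm1, hterm2]
      simp
    rw [hIcc0, hcompl0, add_zero]
  have hintAB : (∫ x, A x) = ∫ x, B x := by
    have h0 : (∫ x, A x) - ∫ x, B x = 0 := by
      rw [← integral_sub hAint hBint, integral_congr_ae hABD, integral_const_mul, hDzero,
        mul_zero]
    exact sub_eq_zero.1 h0
  rw [L2.inner_def, L2.inner_def, integral_congr_ae hLa, integral_congr_ae hRa,
    integral_conj, integral_conj, hintAB]
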